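/- Let e_1, …, e_d be linearly independent in 𝔽_p^d and A = {e_1, …, e_d, α_1e_1 + ⋯ + α_de_d}. Then there exists k with kA = 𝔽_p^d (A is a nice basis) if and only if α_1 + ⋯ + α_d ≢ 1 (mod p). If this holds, then d(p−1)A = 𝔽_p^d and (d(p−1)−1)A ≠ 𝔽_p^d. -/

import Mathlib

open Pointwise

/-- `itSum A n` is the `n`-fold sumset of `A` (sums of exactly `n` elements of `A`). -/
def itSum {G : Type*} [AddCommGroup G] (A : Set G) : ℕ → Set G
  | 0 => {0}
  | n + 1 => itSum A n + A

/-- `SimEq A B` means the symmetric difference of `A` and `B` is finite. -/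
def SimEq {G : Type*} [AddCommGroup G] (A B : Set G) : Prop :=
  (symmDiff A B).Finite

lemma mem_itSum {G : Type*} [AddCommGroup G] {ι : Type*} [Fintype ι] [DecidableEq ι]
    (e : ι → G) (v : G) (k : ℕ) (x : G) :
    x ∈ itSum (Set.range e ∪ {v}) k ↔
      ∃ f : ι → ℕ, ∃ m : ℕ, (∑ i, f i) + m = k ∧ x = (∑ i, f i • e i) + m • v := by
  induction k generalizing x with
  | zero =>
    simp only [itSum, Set.mem_singleton_iff]
    constructor
    · rintro rfl
      exact ⟨0, 0, by simp, by simp⟩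
    · rintro ⟨f, m, hfm, rfl⟩
      have h1 : ∀ i, f i = 0 := by
        intro i
        have := Finset.sum_eq_zero_iff.mp (Nat.eq_zero_of_add_eq_zero_right hfm)
        exact this i (Finset.mem_univ i)
      have h2 : m = 0 := Nat.eq_zero_of_add_eq_zero_left hfm
      simp [h1, h2]
  | succ k ih =>
    show x ∈ itSum _ k + _ ↔ _
    rw [Set.mem_add]
    constructor
    · rintro ⟨y, hy, a, ha, rfl⟩
      obtain ⟨f, m, hfm, rfl⟩ := ih y |>.mp hy
      rcases ha with ⟨j, rfl⟩ | rfl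
      · refine ⟨fun i => f i + (if i = j then 1 else 0), m, ?_, ?_⟩
        · rw [Finset.sum_add_distrib]
          have h1 : ∑ i, (if i = j then 1 else 0 : ℕ) = 1 := by simp
          omega
        · rw [Finset.sum_congr rfl (fun i _ => add_smul (f i) _ (e i))]
          rw [Finset.sum_add_distrib]
          have : ∑ i, (if i = j then 1 else 0 : ℕ) • e i = e j := by
            simp [ite_smul]
          rw [this]; abel
      · exact ⟨f, m + 1, by omega, by rw [succ_nsmul]; abel⟩
    · rintro ⟨f, m, hfm, rfl⟩
      rcases Nat.eq_zero_or_pos m with rfl | hm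
      · have hsum : ∑ i, f i = k + 1 := by omega
        have : ∃ j, 0 < f j := by
          by_contra h
          push_neg at h
          have : ∑ i, f i = 0 := Finset.sum_eq_zero (fun i _ => by have := h i; omega)
          omega
        obtain ⟨j, hj⟩ := this
        refine ⟨(∑ i, (f i - (if i = j then 1 else 0)) • e i) + 0 • v, ?_, e j, ?_, ?_⟩
        · refine (ih _).mpr ⟨_, 0, ?_, rfl⟩
          rw [Finset.sum_tsub_distrib _ (fun i _ => by
              rcases eq_or_ne i j with rfl | hij
              · simp; omega
              · simp [hij])]
          have h1 : ∑ i, (if i = j then 1 else 0 : ℕ) = 1 := by simp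
          omega
        · exact Or.inl ⟨j, rfl⟩
        · have : ∀ i, f i • e i = (f i - (if i = j then 1 else 0)) • e i + (if i = j then 1 else 0) • e i := by
            intro i
            rw [← add_smul]
            congr 1
            rcases eq_or_ne i j with rfl | hij
            · simp
              omega
            · simp [hij]
          rw [Finset.sum_congr rfl (fun i _ => this i), Finset.sum_add_distrib]
          have : ∑ i, (if i = j then 1 else 0 : ℕ) • e i = e j := by simp [ite_smul]
          rw [this]; simp; try abel
      · refine ⟨(∑ i, f i • e i) + (m - 1) • v, (ih _).mpr ⟨f, m - 1, by omega, rfl⟩, v, Or.inr rfl, ?_⟩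
        have : m • v = (m - 1) • v + v := by
          conv_lhs => rw [show m = (m - 1) + 1 by omega]
          rw [succ_nsmul]
        rw [this]; abel

theorem stmt_16 (p : ℕ) [Fact p.Prime] (d : ℕ) (hd : 1 ≤ d)
    (e : Fin d → (Fin d → ZMod p)) (he : LinearIndependent (ZMod p) e)
    (α : Fin d → ZMod p)
    (A : Set (Fin d → ZMod p)) (hA : A = Set.range e ∪ {∑ i, α i • e i}) :
    ((∃ k, 1 ≤ k ∧ itSum A k = Set.univ) ↔ (∑ i, α i) ≠ 1) ∧
    ((∑ i, α i) ≠ 1 →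
      itSum A (d * (p - 1)) = Set.univ ∧ itSum A (d * (p - 1) - 1) ≠ Set.univ) := by
  subst hA
  haveI : NeZero p := ⟨(Fact.out : p.Prime).ne_zero⟩
  have hp2 : 2 ≤ p := (Fact.out : p.Prime).two_le
  haveI : Nonempty (Fin d) := ⟨⟨0, hd⟩⟩
  set s : ZMod p := ∑ i, α i with hs_def
  set v : Fin d → ZMod p := ∑ i, α i • e i with hv_def
  let B := basisOfLinearIndependentOfCardEqFinrank he (by simp)
  have hB : ∀ i, B i = e i := fun i =>
    congrFun (coe_basisOfLinearIndependentOfCardEqFinrank he _) i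
  have hx : ∀ x : Fin d → ZMod p, ∑ i, B.repr x i • e i = x := by
    intro x
    rw [Finset.sum_congr rfl fun i _ => by rw [← hB i]]
    exact B.sum_repr x
  have huniq : ∀ a b : Fin d → ZMod p,
      ∑ i, a i • e i = ∑ i, b i • e i → ∀ i, a i = b i := by
    intro a b h i
    have h0 : ∑ i, (a i - b i) • e i = 0 := by
      simp [sub_smul, Finset.sum_sub_distrib, h]
    exact sub_eq_zero.mp (Fintype.linearIndependent_iff.mp he (fun i => a i - b i) h0 i)
  -- rewrite membership with coefficients
  have hrep : ∀ (f : Fin d → ℕ) (m : ℕ),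
      (∑ i, f i • e i) + m • v = ∑ i, (((f i : ZMod p)) + (m : ZMod p) * α i) • e i := by
    intro f m
    rw [hv_def, Finset.smul_sum, ← Finset.sum_add_distrib]
    refine Finset.sum_congr rfl fun i _ => ?_
    rw [add_smul, Nat.cast_smul_eq_nsmul]
    congr 1
    rw [← Nat.cast_smul_eq_nsmul (ZMod p), smul_smul]
  have hmem : ∀ (k : ℕ) (x : Fin d → ZMod p),
      x ∈ itSum (Set.range e ∪ {v}) k ↔
        ∃ f : Fin d → ℕ, ∃ m : ℕ, (∑ i, f i) + m = k ∧
          x = ∑ i, (((f i : ZMod p)) + (m : ZMod p) * α i) • e i := by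
    intro k x
    rw [mem_itSum]
    exact exists_congr fun f => exists_congr fun m => and_congr_right fun _ => by rw [hrep]
  -- cast of p - 1
  have hpm1 : (((p - 1 : ℕ)) : ZMod p) = -1 := by
    have : ((p : ℕ) : ZMod p) = 0 := ZMod.natCast_self p
    push_cast [Nat.cast_sub (by omega : 1 ≤ p)]
    rw [this]; ring
  have hkcast : (((d * (p - 1) : ℕ)) : ZMod p) = -(d : ZMod p) := by
    push_cast [hpm1]; ring
  have hd1 : 1 ≤ d * (p - 1) := le_trans (by omega) (Nat.mul_le_mul hd (by omega : 1 ≤ p - 1))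
  -- sum of coefficients
  have hcoefsum : ∀ (f : Fin d → ℕ) (m : ℕ),
      ∑ i, (((f i : ZMod p)) + (m : ZMod p) * α i) = ((∑ i, f i : ℕ) : ZMod p) + (m : ZMod p) * s := by
    intro f m
    rw [Finset.sum_add_distrib, ← Finset.mul_sum, Nat.cast_sum]
  -- case s = 1 : never surjective
  have hneg1 : s = 1 → ∀ k, itSum (Set.range e ∪ {v}) k ≠ Set.univ := by
    intro hs1 k hk
    have key : ∀ x : Fin d → ZMod p, (∃ c : Fin d → ZMod p, x = ∑ i, c i • e i ∧
        ∑ i, c i = (k : ZMod p)) := by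
      intro x
      have hxk : x ∈ itSum (Set.range e ∪ {v}) k := hk ▸ Set.mem_univ x
      obtain ⟨f, m, hfm, hxe⟩ := (hmem k x).mp hxk
      refine ⟨_, hxe, ?_⟩
      rw [hcoefsum, hs1, mul_one, ← Nat.cast_add, hfm]
    obtain ⟨c0, hc0, hc0s⟩ := key 0
    obtain ⟨c1, hc1, hc1s⟩ := key (e ⟨0, hd⟩)
    have hz : ∀ i, c0 i = 0 := by
      refine huniq c0 0 ?_
      rw [← hc0]; simp
    have ho : ∀ i, c1 i = if i = ⟨0, hd⟩ then 1 else 0 := by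
      refine huniq c1 _ ?_
      rw [← hc1]
      simp [ite_smul]
    have h0 : (0 : ZMod p) = (k : ZMod p) := by
      rw [← hc0s, Finset.sum_congr rfl fun i _ => hz i]; simp
    have h1 : (1 : ZMod p) = (k : ZMod p) := by
      rw [← hc1s, Finset.sum_congr rfl fun i _ => ho i]; simp
    exact one_ne_zero (h1.trans h0.symm)
  -- case s ≠ 1 : surjective at d(p-1)
  have hpos : s ≠ 1 → itSum (Set.range e ∪ {v}) (d * (p - 1)) = Set.univ := by
    intro hs
    have hs' : s - 1 ≠ 0 := sub_ne_zero.mpr hs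
    ext x
    simp only [Set.mem_univ, iff_true]
    rw [hmem]
    set c : Fin d → ZMod p := fun i => B.repr x i with hc_def
    set μ : ZMod p := (∑ i, c i + d) * (s - 1)⁻¹ with hμ_def
    have hμ : μ * (s - 1) = ∑ i, c i + d := by
      rw [hμ_def, mul_assoc, inv_mul_cancel₀ hs', mul_one]
    set m : ℕ := μ.val with hm_def
    set r : Fin d → ℕ := fun i => (c i - μ * α i).val with hr_def
    set S : ℕ := ∑ i, r i with hS_def
    have hμcast : ((m : ℕ) : ZMod p) = μ := by rw [hm_def, ZMod.natCast_val, ZMod.cast_id]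
    have hrcast : ∀ i, ((r i : ℕ) : ZMod p) = c i - μ * α i := by
      intro i; rw [hr_def]; rw [ZMod.natCast_val, ZMod.cast_id]
    have hScast : ((S : ℕ) : ZMod p) = (∑ i, c i) - μ * s := by
      rw [hS_def, Nat.cast_sum, Finset.sum_congr rfl fun i _ => hrcast i,
        Finset.sum_sub_distrib, ← Finset.mul_sum]
    have hkey : ((S + m : ℕ) : ZMod p) = ((d * (p - 1) : ℕ) : ZMod p) := by
      rw [Nat.cast_add, hScast, hμcast, hkcast]
      have : (∑ i, c i) - μ * s + μ = (∑ i, c i) - μ * (s - 1) := by ring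
      rw [this, hμ]; ring
    have hm : m < p := ZMod.val_lt μ
    have hr : ∀ i, r i < p := fun i => ZMod.val_lt _
    have hSle : S ≤ d * (p - 1) := by
      calc S ≤ ∑ _i : Fin d, (p - 1) := Finset.sum_le_sum fun i _ => by have := hr i; omega
        _ = d * (p - 1) := by simp [Finset.sum_const, mul_comm]
    have hle : S + m ≤ d * (p - 1) := by
      by_contra h
      push_neg at h
      have h2 : p ∣ (S + m - d * (p - 1)) := by
        rw [← ZMod.natCast_eq_zero_iff, Nat.cast_sub (le_of_lt h), hkey, sub_self]
      have := Nat.le_of_dvd (by omega) h2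
      omega
    set D : ℕ := d * (p - 1) - (S + m) with hD_def
    have hD : p ∣ D := by
      rw [hD_def, ← ZMod.natCast_eq_zero_iff, Nat.cast_sub hle, hkey, sub_self]
    have hDcast : ((D : ℕ) : ZMod p) = 0 := (ZMod.natCast_eq_zero_iff _ _).mpr hD
    refine ⟨fun i => r i + if i = ⟨0, hd⟩ then D else 0, m, ?_, ?_⟩
    · rw [Finset.sum_add_distrib]
      have h1 : ∑ i, (if i = (⟨0, hd⟩ : Fin d) then D else 0) = D := by simp
      rw [h1]
      omega
    · rw [← hx x]
      refine Finset.sum_congr rfl fun i _ => ?_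
      congr 1
      have hfc : (((r i + if i = ⟨0, hd⟩ then D else 0 : ℕ)) : ZMod p) = c i - μ * α i := by
        push_cast
        rcases eq_or_ne i ⟨0, hd⟩ with rfl | hij
        · simp [hDcast, ← hrcast]
        · simp [hij, ← hrcast]
      rw [hfc, hμcast]
      show c i = c i - μ * α i + μ * α i
      ring
  -- case s ≠ 1 : not surjective at d(p-1) - 1
  have hneg2 : s ≠ 1 → itSum (Set.range e ∪ {v}) (d * (p - 1) - 1) ≠ Set.univ := by
    intro hs h
    have hs' : s - 1 ≠ 0 := sub_ne_zero.mpr hs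
    set x : Fin d → ZMod p := ∑ i, (-1 - α i) • e i with hx_def
    have hxk : x ∈ itSum (Set.range e ∪ {v}) (d * (p - 1) - 1) := h ▸ Set.mem_univ x
    obtain ⟨f, m, hfm, hxe⟩ := (hmem _ x).mp hxk
    have hcoef : ∀ i, ((f i : ℕ) : ZMod p) + (m : ZMod p) * α i = -1 - α i := by
      intro i
      exact (huniq _ _ (hx_def ▸ hxe.symm) i)
    have hk'cast : (((d * (p - 1) - 1 : ℕ)) : ZMod p) = -(d : ZMod p) - 1 := by
      rw [Nat.cast_sub hd1, hkcast]; push_cast; ring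
    have hconst : ∑ _i : Fin d, (-1 : ZMod p) = -(d : ZMod p) := by
      simp [Finset.sum_const, nsmul_eq_mul]
    have hA1 : ((∑ i, f i : ℕ) : ZMod p) + (m : ZMod p) * s = -(d : ZMod p) - s := by
      rw [← hcoefsum, Finset.sum_congr rfl fun i _ => hcoef i, Finset.sum_sub_distrib,
        hconst, ← hs_def]
    have hfmc : ((∑ i, f i : ℕ) : ZMod p) + (m : ZMod p) = -(d : ZMod p) - 1 := by
      rw [← Nat.cast_add, hfm, hk'cast]
    have hms : ((m : ZMod p) + 1) * (s - 1) = 0 := by linear_combination hA1 - hfmc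
    have hm1 : ((m : ZMod p) + 1) = 0 := by
      rcases mul_eq_zero.mp hms with h' | h'
      · exact h'
      · exact absurd h' hs'
    have hfneg : ∀ i, ((f i : ℕ) : ZMod p) = ((p - 1 : ℕ) : ZMod p) := by
      intro i
      have := hcoef i
      have hmz : (m : ZMod p) = -1 := by linear_combination hm1
      rw [hmz] at this
      rw [hpm1]
      linear_combination this
    have hfge : ∀ i, p - 1 ≤ f i := by
      intro i
      have := (ZMod.natCast_eq_natCast_iff _ _ _).mp (hfneg i)
      have h2 : f i % p = (p - 1) % p := this
      have h3 : (p - 1) % p = p - 1 := Nat.mod_eq_of_lt (by omega)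
      have h4 := Nat.mod_le (f i) p
      omega
    have hfsum : d * (p - 1) ≤ ∑ i, f i := by
      calc d * (p - 1) = ∑ _i : Fin d, (p - 1) := by simp [Finset.sum_const, mul_comm]
        _ ≤ ∑ i, f i := Finset.sum_le_sum fun i _ => hfge i
    omega
  constructor
  · constructor
    · rintro ⟨k, _, hk⟩ hs1
      exact hneg1 hs1 k hk
    · intro hs
      exact ⟨d * (p - 1), hd1, hpos hs⟩
  · intro hs
    exact ⟨hpos hs, hneg2 hs⟩
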